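/- (Invariance of the light ray transform under the space-like projection) For f ∈ L²(ℝ⁴) compactly supported, L(f) = L(φ(D)f), where L is the Minkowski light ray transform Lg(x,θ) = ∫_ℝ g(s, x+sθ) ds and φ(D) is the Fourier multiplier by the indicator of the closure of the space-like cone (equal to 1 on {τ² ≤ |ξ|²} and 0 on {τ² > |ξ|²}). -/

import Mathlib

noncomputable section
open MeasureTheory

/-- The Fourier transform on `ℝ⁴ = ℝ_t × ℝ³_x`, `𝓕f(τ,ξ) = ∫ e^{−i(tτ + x·ξ)} f(t,x) dt dx`. -/
def spacetimeFourier (f : ℝ × EuclideanSpace ℝ (Fin 3) → ℂ)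
    (q : ℝ × EuclideanSpace ℝ (Fin 3)) : ℂ :=
  ∫ p : ℝ × EuclideanSpace ℝ (Fin 3),
    Complex.exp (-(Complex.I * ((p.1 * q.1 + inner ℝ p.2 q.2 : ℝ) : ℂ))) * f p

/-- The indicator function of the closure of the space-like cone, equal to `1` on
`{τ² ≤ |ξ|²}` and `0` on `{τ² > |ξ|²}`. -/
def closedSpacelikeIndicator (q : ℝ × EuclideanSpace ℝ (Fin 3)) : ℂ :=
  if q.1 ^ 2 ≤ ‖q.2‖ ^ 2 then 1 else 0

open Complex FourierTransform Real
open scoped RealInnerProductSpace ContDiff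

namespace LightRayAux

variable {V : Type*} [NormedAddCommGroup V] [InnerProductSpace ℝ V]
  [MeasurableSpace V] [BorelSpace V] [FiniteDimensional ℝ V]

/-- A smooth compactly supported function, as a Schwartz map. -/
def toSchwartz (g : V → ℝ) (hs : ContDiff ℝ ∞ g) (hc : HasCompactSupport g) :
    SchwartzMap V ℂ where
  toFun x := (g x : ℂ)
  smooth' := Complex.ofRealCLM.contDiff.comp hs
  decay' k n := by
    have hG : ContDiff ℝ ∞ (fun x => (g x : ℂ)) := Complex.ofRealCLM.contDiff.comp hs
    have hGc : HasCompactSupport (fun x => (g x : ℂ)) :=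
      hc.comp_left (g := fun r : ℝ => (r : ℂ)) (by simp)
    have hd : HasCompactSupport (iteratedFDeriv ℝ n (fun x => (g x : ℂ))) :=
      hGc.iteratedFDeriv n
    have hcont : Continuous (fun x => ‖x‖ ^ k * ‖iteratedFDeriv ℝ n (fun x => (g x : ℂ)) x‖) := by
      exact ((continuous_norm.pow k).mul
        (hG.continuous_iteratedFDeriv (by exact_mod_cast le_top)).norm)
    have hu : HasCompactSupport
        (fun x => ‖x‖ ^ k * ‖iteratedFDeriv ℝ n (fun x => (g x : ℂ)) x‖) := by
      apply HasCompactSupport.mul_left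
      exact hd.comp_left (g := norm) (by simp)
    obtain ⟨C, hC⟩ := hcont.bounded_above_of_compact_support hu
    exact ⟨C, fun x => (le_abs_self _).trans (hC x)⟩

/-- A function integrable on a finite-dimensional inner product space whose Fourier transform
vanishes identically vanishes almost everywhere. -/
lemma ae_zero_of_fourier_zero {F : V → ℂ} (hF : Integrable F)
    (h0 : ∀ ξ, 𝓕 F ξ = 0) : F =ᵐ[volume] (fun _ => (0 : ℂ)) := by
  apply ae_eq_zero_of_integral_contDiff_smul_eq_zero hF.locallyIntegrable
  intro g hgs hgc
  set G := toSchwartz g hgs hgc with hGdef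
  set ψ := (SchwartzMap.fourierTransformCLE ℂ (SchwartzMap V ℂ)).symm G with hψdef
  have hψ : 𝓕 (⇑ψ) = ⇑G := by
    have := (SchwartzMap.fourierTransformCLE ℂ (SchwartzMap V ℂ)).apply_symm_apply G
    rw [← this]
    rfl
  have flipL : (innerₗ V).flip = innerₗ V := by
    ext x y
    simp [real_inner_comm]
  have key := VectorFourier.integral_fourierIntegral_smul_eq_flip
    (L := innerₗ V) (μ := (volume : Measure V)) (ν := (volume : Measure V))
    Real.continuous_fourierChar (by exact continuous_inner) ψ.integrable hF
  have : ∫ x, g x • F x = ∫ x, (𝓕 (⇑ψ) x) • F x := by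
    congr 1 with x
    rw [hψ]
    show g x • F x = (g x : ℂ) • F x
    simp [Complex.real_smul]
  rw [this]
  have : ∫ x, (𝓕 (⇑ψ) x) • F x
      = ∫ x, ψ x • VectorFourier.fourierIntegral 𝐞 volume (innerₗ V).flip F x := by
    exact key
  rw [this]
  have h2 : ∀ x, VectorFourier.fourierIntegral 𝐞 volume (innerₗ V) F x = 0 := h0
  simp [flipL, smul_eq_mul, h2]

abbrev E3 := EuclideanSpace ℝ (Fin 3)

/-- The light-ray shear `(s, x) ↦ (s, x + sθ)` as a homeomorphism of `ℝ × ℝ³`. -/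
def shearHomeo (θ : E3) : (ℝ × E3) ≃ₜ (ℝ × E3) where
  toFun p := (p.1, p.2 + p.1 • θ)
  invFun p := (p.1, p.2 - p.1 • θ)
  left_inv p := by simp
  right_inv p := by simp
  continuous_toFun := by fun_prop
  continuous_invFun := by fun_prop

lemma shear_mp (θ : E3) : MeasurePreserving (shearHomeo θ) volume volume := by
  rw [Measure.volume_eq_prod]
  exact MeasurePreserving.skew_product (MeasurePreserving.id _)
    (by fun_prop : Measurable (Function.uncurry fun (s : ℝ) (x : E3) => x + s • θ))
    (Filter.Eventually.of_forall fun s => map_add_right_eq_self volume (s • θ))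

lemma shear_integrable {h : ℝ × E3 → ℂ} (hh : Integrable h) (θ : E3) :
    Integrable (fun p : ℝ × E3 => h (p.1, p.2 + p.1 • θ)) :=
  ((shear_mp θ).integrable_comp_emb (shearHomeo θ).measurableEmbedding).2 hh

lemma kernel_integrable {f : ℝ × E3 → ℂ} (hf : Integrable f) (q : ℝ × E3) :
    Integrable (fun p : ℝ × E3 =>
      Complex.exp (-(Complex.I * ((p.1 * q.1 + inner ℝ p.2 q.2 : ℝ) : ℂ))) * f p) := by
  apply hf.bdd_mul (c := 1)
  · apply Continuous.aestronglyMeasurable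
    apply Complex.continuous_exp.comp
    apply Continuous.neg
    apply Continuous.mul continuous_const
    apply Complex.continuous_ofReal.comp
    exact (continuous_fst.mul continuous_const).add (continuous_snd.inner continuous_const)
  · refine Filter.Eventually.of_forall fun p => ?_
    rw [Complex.norm_exp]
    simp

lemma spacetimeFourier_sub {f g : ℝ × E3 → ℂ} (hf : Integrable f) (hg : Integrable g)
    (q : ℝ × E3) :
    spacetimeFourier (fun p => f p - g p) q = spacetimeFourier f q - spacetimeFourier g q := by
  unfold spacetimeFourier
  simp_rw [mul_sub]
  exact integral_sub (kernel_integrable hf q) (kernel_integrable hg q)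

/-- The Fourier slice theorem for the light ray transform. -/
lemma fourier_slice {h : ℝ × E3 → ℂ} (hh : Integrable h) (θ : E3) (ξ : E3) :
    𝓕 (fun x : E3 => ∫ s : ℝ, h (s, x + s • θ)) ξ
      = spacetimeFourier h (-(2 * π * ⟪θ, ξ⟫), (2 * π) • ξ) := by
  have hH : Integrable (fun p : ℝ × E3 => h (p.1, p.2 + p.1 • θ)) := shear_integrable hh θ
  have hHp : Integrable (fun p : ℝ × E3 => h (p.1, p.2 + p.1 • θ))
      ((volume : Measure ℝ).prod (volume : Measure E3)) := by rwa [← Measure.volume_eq_prod]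
  set τ : ℝ := -(2 * π * ⟪θ, ξ⟫) with hτ
  set ζ : E3 := (2 * π) • ξ with hζ
  set K : ℝ × E3 → ℂ := fun p =>
    Complex.exp (-(Complex.I * ((p.1 * τ + ⟪p.2, ζ⟫ : ℝ) : ℂ))) * h p with hKdef
  have hK : Integrable K := kernel_integrable hh (τ, ζ)
  have hKp : Integrable K ((volume : Measure ℝ).prod (volume : Measure E3)) := by
    rwa [← Measure.volume_eq_prod]
  have hu : Integrable (Function.uncurry fun (x : E3) (s : ℝ) =>
      𝐞 (-⟪x, ξ⟫) • h (s, x + s • θ)) ((volume : Measure E3).prod (volume : Measure ℝ)) := by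
    have hsw : Integrable (fun p : E3 × ℝ => h (p.2, p.1 + p.2 • θ))
        ((volume : Measure E3).prod (volume : Measure ℝ)) := hHp.swap
    have hc : Continuous fun p : E3 × ℝ => ((𝐞 (-⟪p.1, ξ⟫) : Circle) : ℂ) := by
      apply continuous_subtype_val.comp
      exact Real.continuous_fourierChar.comp (continuous_fst.inner continuous_const).neg
    have hb : Integrable (fun p : E3 × ℝ =>
        ((𝐞 (-⟪p.1, ξ⟫) : Circle) : ℂ) * h (p.2, p.1 + p.2 • θ))
        ((volume : Measure E3).prod (volume : Measure ℝ)) :=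
      hsw.bdd_mul (c := 1) hc.aestronglyMeasurable (Filter.Eventually.of_forall fun p => (Circle.norm_coe _).le)
    apply hb.congr
    filter_upwards with p
    simp [Function.uncurry, Circle.smul_def]
  rw [Real.fourier_eq]
  calc
    ∫ x : E3, 𝐞 (-⟪x, ξ⟫) • ∫ s : ℝ, h (s, x + s • θ)
        = ∫ x : E3, ∫ s : ℝ, 𝐞 (-⟪x, ξ⟫) • h (s, x + s • θ) := by
          congr 1 with x
          simp_rw [Circle.smul_def, smul_eq_mul]
          rw [integral_const_mul]
    _ = ∫ s : ℝ, ∫ x : E3, 𝐞 (-⟪x, ξ⟫) • h (s, x + s • θ) := integral_integral_swap hu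
    _ = ∫ s : ℝ, ∫ y : E3, 𝐞 (-⟪y - s • θ, ξ⟫) • h (s, y) := by
          congr 1 with s
          rw [← integral_add_right_eq_self (μ := volume)
            (fun y : E3 => 𝐞 (-⟪y - s • θ, ξ⟫) • h (s, y)) (s • θ)]
          simp
    _ = ∫ s : ℝ, ∫ y : E3, K (s, y) := by
          congr 1 with s
          congr 1 with y
          rw [hKdef]
          simp only [Circle.smul_def, Real.fourierChar_apply]
          congr 2
          push_cast [inner_sub_left, real_inner_smul_left, real_inner_smul_right, hτ, hζ]
          ring
    _ = ∫ p : ℝ × E3, K p ∂((volume : Measure ℝ).prod (volume : Measure E3)) :=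
          (integral_prod K hKp).symm
    _ = spacetimeFourier h (τ, ζ) := by
          rw [spacetimeFourier, Measure.volume_eq_prod]

end LightRayAux

open LightRayAux

/-- Invariance of the light ray transform under the space-like projection:
for `f ∈ L²(ℝ⁴)` compactly supported, `L f = L (φ(D) f)`, where
`L g(x,θ) = ∫_ℝ g(s, x+sθ) ds` is the Minkowski light ray transform and `φ(D)` is the
Fourier multiplier by the indicator of the closure of the space-like cone.  Here
`g` represents `φ(D)f`, characterized by `𝓕g = φ·𝓕f`. -/
theorem lightRay_eq_lightRay_spacelike_projection
    (f g : ℝ × EuclideanSpace ℝ (Fin 3) → ℂ)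
    (hfL2 : MemLp f 2) (hfsupp : HasCompactSupport f) (hfL1 : Integrable f)
    (hgL1 : Integrable g)
    (hg : ∀ q, spacetimeFourier g q = closedSpacelikeIndicator q * spacetimeFourier f q)
    (θ : EuclideanSpace ℝ (Fin 3)) (hθ : ‖θ‖ = 1) :
    (fun x => ∫ s : ℝ, f (s, x + s • θ)) =ᵐ[volume]
      (fun x => ∫ s : ℝ, g (s, x + s • θ)) := by
  set h : ℝ × E3 → ℂ := fun p => f p - g p with hhdef
  have hh : Integrable h := hfL1.sub hgL1
  have hzero : ∀ ξ : E3, 𝓕 (fun x : E3 => ∫ s : ℝ, h (s, x + s • θ)) ξ = 0 := by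
    intro ξ
    rw [fourier_slice hh θ ξ, hhdef,
      spacetimeFourier_sub hfL1 hgL1 (-(2 * π * ⟪θ, ξ⟫), (2 * π) • ξ), hg]
    have hcond : (-(2 * π * ⟪θ, ξ⟫)) ^ 2 ≤ ‖(2 * π) • ξ‖ ^ 2 := by
      have h1 : |⟪θ, ξ⟫| ≤ ‖ξ‖ := by
        have := abs_real_inner_le_norm θ ξ
        rwa [hθ, one_mul] at this
      have h2 : ‖(2 * π : ℝ) • ξ‖ = (2 * π) * ‖ξ‖ := by
        rw [norm_smul, Real.norm_eq_abs, abs_of_pos (by positivity)]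
      rw [h2]
      have h3 : ⟪θ, ξ⟫ ^ 2 ≤ ‖ξ‖ ^ 2 := by
        rw [← _root_.sq_abs ⟪θ, ξ⟫]
        exact pow_le_pow_left₀ (abs_nonneg _) h1 2
      have h4 := mul_le_mul_of_nonneg_left h3
        (by positivity : (0:ℝ) ≤ (2 * π) ^ 2)
      calc (-(2 * π * ⟪θ, ξ⟫)) ^ 2 = (2 * π) ^ 2 * ⟪θ, ξ⟫ ^ 2 := by ring
        _ ≤ (2 * π) ^ 2 * ‖ξ‖ ^ 2 := h4
        _ = (2 * π * ‖ξ‖) ^ 2 := by ring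
    have : closedSpacelikeIndicator (-(2 * π * ⟪θ, ξ⟫), (2 * π) • ξ) = 1 := by
      rw [closedSpacelikeIndicator, if_pos hcond]
    rw [this]
    ring
  have hH : Integrable (fun p : ℝ × E3 => h (p.1, p.2 + p.1 • θ)) := shear_integrable hh θ
  have hHp : Integrable (fun p : ℝ × E3 => h (p.1, p.2 + p.1 • θ))
      ((volume : Measure ℝ).prod (volume : Measure E3)) := by rwa [← Measure.volume_eq_prod]
  have hLh : Integrable (fun x : E3 => ∫ s : ℝ, h (s, x + s • θ)) :=
    hHp.integral_prod_right
  have hmain := ae_zero_of_fourier_zero hLh hzero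
  have haef : ∀ᵐ x : E3, Integrable (fun s : ℝ => f (s, x + s • θ)) := by
    have hFf : Integrable (fun p : ℝ × E3 => f (p.1, p.2 + p.1 • θ))
        ((volume : Measure ℝ).prod (volume : Measure E3)) := by
      rw [← Measure.volume_eq_prod]; exact shear_integrable hfL1 θ
    exact hFf.prod_left_ae
  have haeg : ∀ᵐ x : E3, Integrable (fun s : ℝ => g (s, x + s • θ)) := by
    have hFg : Integrable (fun p : ℝ × E3 => g (p.1, p.2 + p.1 • θ))
        ((volume : Measure ℝ).prod (volume : Measure E3)) := by
      rw [← Measure.volume_eq_prod]; exact shear_integrable hgL1 θ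
    exact hFg.prod_left_ae
  filter_upwards [hmain, haef, haeg] with x hx hfx hgx
  have hsub : ∫ s : ℝ, h (s, x + s • θ)
      = (∫ s : ℝ, f (s, x + s • θ)) - ∫ s : ℝ, g (s, x + s • θ) := by
    rw [hhdef]
    exact integral_sub hfx hgx
  have : (0 : ℂ) = (∫ s : ℝ, f (s, x + s • θ)) - ∫ s : ℝ, g (s, x + s • θ) := by
    rw [← hsub]; exact hx.symm
  have := sub_eq_zero.mp this.symm
  exact this
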